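/- Let G be a group with finite generating set S closed under inversion and not containing the identity, whose word metric d is δ-hyperbolic for some δ ≥ 0, and suppose C₂ > 1 is a constant such that #B_k ≥ C₂ · #B_{k−1} for all integers k ≥ 1. Then there exists a constant C₄ > 0 such that for all g ∈ G and all integers k ≥ 1, the average Gromov product over the sphere of radius k satisfies (1/#S_k) Σ_{s ∈ S_k} (g,s)₁ ≤ C₄. -/

import Mathlib

section Defs

variable {G : Type*} [Group G]

/-- Word length with respect to a generating set `S`: the least `n` such that `g`
is a product of `n` elements of `S`. -/
noncomputable def wlen (S : Set G) (g : G) : ℕ :=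
  sInf {n | ∃ l : List G, (∀ x ∈ l, x ∈ S) ∧ l.length = n ∧ l.prod = g}

/-- Word metric: `d(g,h) = |h⁻¹ g|`. -/
noncomputable def wdist (S : Set G) (x y : G) : ℝ := wlen S (y⁻¹ * x)

/-- Gromov product `(x,y)_w = ½ (d(x,w) + d(w,y) − d(x,y))`. -/
noncomputable def gp (S : Set G) (x y w : G) : ℝ :=
  (wdist S x w + wdist S w y - wdist S x y) / 2

/-- The word metric is `δ`-hyperbolic (Gromov's four-point condition). -/
def IsDeltaHyperbolic (S : Set G) (δ : ℝ) : Prop :=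
  ∀ x y z w : G, gp S x y w ≥ min (gp S x z w) (gp S y z w) - δ

/-- A group is virtually cyclic if it has a cyclic subgroup of finite index. -/
def VirtuallyCyclic (G : Type*) [Group G] : Prop :=
  ∃ H : Subgroup G, IsCyclic H ∧ H.FiniteIndex

/-- `GenCon(g)`: the average word length of the conjugates of `g`
by the generators in `S`. -/
noncomputable def genCon (S : Set G) (g : G) : ℝ :=
  (∑ᶠ s ∈ S, (wlen S (s⁻¹ * g * s) : ℝ)) / S.ncard

/-- Conjugation curvature `κ(g) = (|g| − GenCon(g)) / |g|`. -/
noncomputable def kappa (S : Set G) (g : G) : ℝ :=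
  ((wlen S g : ℝ) - genCon S g) / (wlen S g)

/-- `k`-spherical conjugation curvature
`κ_k(g) = (|g| − (1/#S_k) Σ_{s ∈ S_k} d(gs,s)) / |g|`; note `d(gs,s) = |s⁻¹ g s|`. -/
noncomputable def kappaK (S : Set G) (k : ℕ) (g : G) : ℝ :=
  ((wlen S g : ℝ) -
      (∑ᶠ s ∈ {x : G | wlen S x = k}, (wlen S (s⁻¹ * g * s) : ℝ)) /
        ({x : G | wlen S x = k} : Set G).ncard) / (wlen S g)

end Defs


section Basics
variable {G : Type*} [Group G] {S : Set G}

lemma wlen_exists (hgen : Subgroup.closure S = ⊤) (hinv : ∀ s ∈ S, s⁻¹ ∈ S) (g : G) :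
    ∃ l : List G, (∀ x ∈ l, x ∈ S) ∧ l.prod = g := by
  have hg : g ∈ Subgroup.closure S := hgen ▸ Subgroup.mem_top g
  induction hg using Subgroup.closure_induction with
  | mem x hx => exact ⟨[x], by simp [hx]⟩
  | one => exact ⟨[], by simp⟩
  | mul x y _ _ ihx ihy =>
    obtain ⟨l1, h1, e1⟩ := ihx; obtain ⟨l2, h2, e2⟩ := ihy
    refine ⟨l1 ++ l2, ?_, by simp [e1, e2]⟩
    intro x hx; rcases List.mem_append.1 hx with h | h
    exacts [h1 _ h, h2 _ h]
  | inv x _ ih =>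
    obtain ⟨l, h, e⟩ := ih
    refine ⟨(l.map fun y => y⁻¹).reverse, ?_, ?_⟩
    · intro y hy
      simp only [List.mem_reverse, List.mem_map] at hy
      obtain ⟨z, hz, rfl⟩ := hy
      exact hinv _ (h _ hz)
    · rw [← List.prod_inv_reverse, e]

lemma wlen_spec (hgen : Subgroup.closure S = ⊤) (hinv : ∀ s ∈ S, s⁻¹ ∈ S) (g : G) :
    ∃ l : List G, (∀ x ∈ l, x ∈ S) ∧ l.length = wlen S g ∧ l.prod = g := by
  have h : {n | ∃ l : List G, (∀ x ∈ l, x ∈ S) ∧ l.length = n ∧ l.prod = g}.Nonempty := by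
    obtain ⟨l, hl, he⟩ := wlen_exists hgen hinv g
    exact ⟨l.length, l, hl, rfl, he⟩
  exact Nat.sInf_mem h

lemma wlen_le {l : List G} (h : ∀ x ∈ l, x ∈ S) : wlen S l.prod ≤ l.length :=
  Nat.sInf_le ⟨l, h, rfl, rfl⟩

lemma wlen_one : wlen S (1 : G) = 0 :=
  Nat.le_zero.mp (wlen_le (l := []) (by simp))

lemma wlen_mul_le (hgen : Subgroup.closure S = ⊤) (hinv : ∀ s ∈ S, s⁻¹ ∈ S) (a b : G) :
    wlen S (a * b) ≤ wlen S a + wlen S b := by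
  obtain ⟨l1, h1, e1, p1⟩ := wlen_spec hgen hinv a
  obtain ⟨l2, h2, e2, p2⟩ := wlen_spec hgen hinv b
  have : wlen S ((l1 ++ l2).prod) ≤ (l1 ++ l2).length := by
    apply wlen_le; intro x hx
    rcases List.mem_append.1 hx with h | h
    exacts [h1 _ h, h2 _ h]
  simpa [p1, p2, e1, e2] using this

lemma wlen_inv (hgen : Subgroup.closure S = ⊤) (hinv : ∀ s ∈ S, s⁻¹ ∈ S) (g : G) :
    wlen S g⁻¹ = wlen S g := by
  have key : ∀ h : G, wlen S h⁻¹ ≤ wlen S h := by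
    intro h
    obtain ⟨l, hl, e, p⟩ := wlen_spec hgen hinv h
    have : wlen S ((l.map fun y => y⁻¹).reverse.prod) ≤ (l.map fun y => y⁻¹).reverse.length := by
      apply wlen_le; intro y hy
      simp only [List.mem_reverse, List.mem_map] at hy
      obtain ⟨z, hz, rfl⟩ := hy
      exact hinv _ (hl _ hz)
    rw [← List.prod_inv_reverse, p] at this
    simpa [e] using this
  exact le_antisymm (key g) (by simpa using key g⁻¹)

lemma ball_finite (hfin : S.Finite) (hgen : Subgroup.closure S = ⊤)
    (hinv : ∀ s ∈ S, s⁻¹ ∈ S) (k : ℕ) : {x : G | wlen S x ≤ k}.Finite := by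
  have : Finite S := hfin
  have hsub : {x : G | wlen S x ≤ k} ⊆
      (fun l : List S => (l.map Subtype.val).prod) '' {l : List S | l.length ≤ k} := by
    intro x hx
    obtain ⟨l, hl, e, p⟩ := wlen_spec hgen hinv x
    refine ⟨l.pmap (fun y hy => (⟨y, hy⟩ : S)) hl, by simpa [e] using hx, ?_⟩
    simp only [List.map_pmap]
    rw [List.pmap_eq_map, List.map_id']
    · exact p
  exact ((List.finite_length_le S k).image _).subset hsub

end Basics

section GP
variable {G : Type*} [Group G] {S : Set G}

lemma wdist_symm (hgen : Subgroup.closure S = ⊤) (hinv : ∀ s ∈ S, s⁻¹ ∈ S) (x y : G) :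
    wdist S x y = wdist S y x := by
  unfold wdist
  rw [← wlen_inv hgen hinv (y⁻¹ * x)]
  simp [mul_inv_rev]

lemma gp_symm (hgen : Subgroup.closure S = ⊤) (hinv : ∀ s ∈ S, s⁻¹ ∈ S) (x y w : G) :
    gp S x y w = gp S y x w := by
  unfold gp
  rw [wdist_symm hgen hinv x y, wdist_symm hgen hinv x w, wdist_symm hgen hinv w y]
  ring

lemma gp_one_eq (hgen : Subgroup.closure S = ⊤) (hinv : ∀ s ∈ S, s⁻¹ ∈ S) (x y : G) :
    gp S x y 1 = ((wlen S x : ℝ) + wlen S y - wlen S (y⁻¹ * x)) / 2 := by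
  unfold gp wdist
  rw [show (1 : G)⁻¹ * x = x by simp, show y⁻¹ * 1 = y⁻¹ by simp,
    wlen_inv hgen hinv y]

lemma gp_nonneg (hgen : Subgroup.closure S = ⊤) (hinv : ∀ s ∈ S, s⁻¹ ∈ S) (x y : G) :
    0 ≤ gp S x y 1 := by
  rw [gp_one_eq hgen hinv]
  have h : wlen S (y⁻¹ * x) ≤ wlen S y⁻¹ + wlen S x := wlen_mul_le hgen hinv _ _
  rw [wlen_inv hgen hinv] at h
  have := (Nat.cast_le (α := ℝ)).2 h
  push_cast at this ⊢
  linarith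

lemma gp_le_right (hgen : Subgroup.closure S = ⊤) (hinv : ∀ s ∈ S, s⁻¹ ∈ S) (x y : G) :
    gp S x y 1 ≤ (wlen S y : ℝ) := by
  rw [gp_one_eq hgen hinv]
  have h : wlen S x ≤ wlen S y + wlen S (y⁻¹ * x) := by
    have := wlen_mul_le hgen hinv y (y⁻¹ * x)
    simpa using this
  have := (Nat.cast_le (α := ℝ)).2 h
  push_cast at this ⊢
  linarith

lemma exists_prefix (hgen : Subgroup.closure S = ⊤) (hinv : ∀ s ∈ S, s⁻¹ ∈ S)
    (g : G) (j : ℕ) (hj : j ≤ wlen S g) :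
    ∃ p : G, wlen S p = j ∧ wlen S (p⁻¹ * g) = wlen S g - j := by
  obtain ⟨l, hl, e, pr⟩ := wlen_spec hgen hinv g
  refine ⟨(l.take j).prod, ?_, ?_⟩
  · have h1 : wlen S (l.take j).prod ≤ (l.take j).length :=
      wlen_le fun x hx => hl x (List.mem_of_mem_take hx)
    have h2 : wlen S (l.drop j).prod ≤ (l.drop j).length :=
      wlen_le fun x hx => hl x (List.mem_of_mem_drop hx)
    have hsum : wlen S g ≤ wlen S (l.take j).prod + wlen S (l.drop j).prod := by
      have := wlen_mul_le hgen hinv (l.take j).prod (l.drop j).prod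
      rwa [List.prod_take_mul_prod_drop, pr] at this
    simp only [List.length_take, List.length_drop, e] at h1 h2
    omega
  · have hq : (l.take j).prod⁻¹ * g = (l.drop j).prod := by
      rw [← pr, ← List.prod_take_mul_prod_drop l j]; group
    rw [hq]
    have h1 : wlen S (l.take j).prod ≤ (l.take j).length :=
      wlen_le fun x hx => hl x (List.mem_of_mem_take hx)
    have h2 : wlen S (l.drop j).prod ≤ (l.drop j).length :=
      wlen_le fun x hx => hl x (List.mem_of_mem_drop hx)
    have hsum : wlen S g ≤ wlen S (l.take j).prod + wlen S (l.drop j).prod := by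
      have := wlen_mul_le hgen hinv (l.take j).prod (l.drop j).prod
      rwa [List.prod_take_mul_prod_drop, pr] at this
    simp only [List.length_take, List.length_drop, e] at h1 h2
    omega

lemma gp_prefix (hgen : Subgroup.closure S = ⊤) (hinv : ∀ s ∈ S, s⁻¹ ∈ S)
    {p s : G} {j k : ℕ} (hjk : j ≤ k) (hp : wlen S p = j) (hs : wlen S s = k)
    (h2 : wlen S (p⁻¹ * s) = k - j) : gp S p s 1 = (j : ℝ) := by
  rw [gp_one_eq hgen hinv]
  have : wlen S (s⁻¹ * p) = k - j := by
    rw [← wlen_inv hgen hinv, mul_inv_rev, inv_inv, h2]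
  rw [hp, hs, this, Nat.cast_sub hjk]
  ring

lemma prefix_close (hgen : Subgroup.closure S = ⊤) (hinv : ∀ s ∈ S, s⁻¹ ∈ S)
    {δ : ℝ} (hδ : 0 ≤ δ) (hhyp : IsDeltaHyperbolic S δ)
    (g s t : G) (j k : ℕ) (hjk : j ≤ k)
    (hs : wlen S s = k) (ht : wlen S t = k)
    (hgs : (j : ℝ) ≤ gp S g s 1) (hgt : (j : ℝ) ≤ gp S g t 1)
    {ps pt : G} (hps : wlen S ps = j) (hps2 : wlen S (ps⁻¹ * s) = k - j)
    (hpt : wlen S pt = j) (hpt2 : wlen S (pt⁻¹ * t) = k - j) :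
    (wlen S (pt⁻¹ * ps) : ℝ) ≤ 6 * δ := by
  have e1 : gp S ps s 1 = (j : ℝ) := gp_prefix hgen hinv hjk hps hs hps2
  have e2 : gp S pt t 1 = (j : ℝ) := gp_prefix hgen hinv hjk hpt ht hpt2
  have hsg : (j : ℝ) ≤ gp S s g 1 := by rwa [gp_symm hgen hinv s g 1]
  have htg : (j : ℝ) ≤ gp S t g 1 := by rwa [gp_symm hgen hinv t g 1]
  have h1 : gp S s t 1 ≥ (j : ℝ) - δ := by
    have := hhyp s t g 1
    have hmin : (j : ℝ) ≤ min (gp S s g 1) (gp S t g 1) := le_min hsg htg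
    linarith
  have h2 : gp S ps t 1 ≥ (j : ℝ) - 2 * δ := by
    have := hhyp ps t s 1
    have hts : gp S t s 1 = gp S s t 1 := gp_symm hgen hinv t s 1
    have e1' : gp S ps s 1 = (j : ℝ) := e1
    have hmin : (j : ℝ) - δ ≤ min (gp S ps s 1) (gp S t s 1) := by
      apply le_min <;> [linarith; linarith]
    linarith
  have h3 : gp S ps pt 1 ≥ (j : ℝ) - 3 * δ := by
    have := hhyp ps pt t 1
    have hptt : gp S pt t 1 = (j : ℝ) := e2
    have hmin : (j : ℝ) - 2 * δ ≤ min (gp S ps t 1) (gp S pt t 1) := by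
      apply le_min <;> [linarith; linarith]
    linarith
  have he : gp S ps pt 1 = ((j : ℝ) + j - wlen S (pt⁻¹ * ps)) / 2 := by
    rw [gp_one_eq hgen hinv, hps, hpt]
  rw [he] at h3
  linarith

end GP

section Count
variable {G : Type*} [Group G] {S : Set G}

lemma count_lemma (hgen : Subgroup.closure S = ⊤) (hinv : ∀ s ∈ S, s⁻¹ ∈ S)
    {δ : ℝ} (hδ : 0 ≤ δ) (hhyp : IsDeltaHyperbolic S δ)
    (g : G) (k j : ℕ) (hjk : j ≤ k)
    (Sk : Finset G) (hSk : ∀ s ∈ Sk, wlen S s = k)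
    (BD Bkj : Finset G)
    (hBD : ∀ x : G, (wlen S x : ℝ) ≤ 6 * δ → x ∈ BD)
    (hBkj : ∀ x : G, wlen S x ≤ k - j → x ∈ Bkj) :
    (Sk.filter (fun s => (j : ℝ) ≤ gp S g s 1)).card ≤ BD.card * Bkj.card := by
  classical
  set A := Sk.filter (fun s => (j : ℝ) ≤ gp S g s 1) with hA
  rcases A.eq_empty_or_nonempty with h | ⟨s₀, hs₀⟩
  · simp [h]
  have hmemA : ∀ s ∈ A, wlen S s = k ∧ (j : ℝ) ≤ gp S g s 1 := by
    intro s hs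
    rw [hA, Finset.mem_filter] at hs
    exact ⟨hSk s hs.1, hs.2⟩
  have hpre : ∀ s ∈ A, ∃ p : G, wlen S p = j ∧ wlen S (p⁻¹ * s) = k - j := by
    intro s hs
    obtain ⟨hsk, _⟩ := hmemA s hs
    obtain ⟨p, hp1, hp2⟩ := exists_prefix hgen hinv s j (by omega)
    exact ⟨p, hp1, by rwa [hsk] at hp2⟩
  choose! p hp1 hp2 using hpre
  have hclose : ∀ s ∈ A, (wlen S ((p s₀)⁻¹ * p s) : ℝ) ≤ 6 * δ := by
    intro s hs
    obtain ⟨hsk, hgs⟩ := hmemA s hs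
    obtain ⟨hs0k, hgs0⟩ := hmemA s₀ hs₀
    exact prefix_close hgen hinv hδ hhyp g s s₀ j k hjk hsk hs0k hgs hgs0
      (hp1 s hs) (hp2 s hs) (hp1 s₀ hs₀) (hp2 s₀ hs₀)
  have hcard : A.card ≤ (BD ×ˢ Bkj).card := by
    apply Finset.card_le_card_of_injOn (fun s => ((p s₀)⁻¹ * p s, (p s)⁻¹ * s))
    · intro s hs
      rw [Finset.mem_coe, Finset.mem_product]
      exact ⟨hBD _ (hclose s hs), hBkj _ (le_of_eq (hp2 s hs))⟩
    · intro s hs t ht hst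
      simp only [Prod.mk.injEq] at hst
      have h1 : p s = p t := mul_left_cancel hst.1
      have h2 := hst.2
      rw [h1] at h2
      exact mul_left_cancel h2
  rwa [Finset.card_product] at hcard

end Count

/-- Sphere bounding lemma: given the growth constant `C₂ > 1`, there is `C₄ > 0`
bounding, for every `g` and every `k ≥ 1`, the average Gromov product
`(1/#S_k) Σ_{s ∈ S_k} (g,s)₁` over the sphere of radius `k`. -/
theorem sphere_bounding_lemma {G : Type*} [Group G] (S : Set G)
    (hfin : S.Finite) (hgen : Subgroup.closure S = ⊤)
    (hinv : ∀ s ∈ S, s⁻¹ ∈ S) (hone : (1 : G) ∉ S)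
    (δ : ℝ) (hδ : 0 ≤ δ) (hhyp : IsDeltaHyperbolic S δ)
    (C₂ : ℝ) (hC₂ : 1 < C₂)
    (hgrowth : ∀ k : ℕ, 1 ≤ k →
      C₂ * (({x : G | wlen S x ≤ k - 1} : Set G).ncard : ℝ) ≤
        (({x : G | wlen S x ≤ k} : Set G).ncard : ℝ)) :
    ∃ C₄ : ℝ, 0 < C₄ ∧ ∀ g : G, ∀ k : ℕ, 1 ≤ k →
      (∑ᶠ s ∈ ({x : G | wlen S x = k} : Set G), gp S g s 1) /
        (({x : G | wlen S x = k} : Set G).ncard : ℝ) ≤ C₄ := by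
  classical
  have ballfin : ∀ m : ℕ, {x : G | wlen S x ≤ m}.Finite :=
    fun m => ball_finite hfin hgen hinv m
  set Bf : ℕ → Finset G := fun m => (ballfin m).toFinset with hBf
  have hmemB : ∀ m : ℕ, ∀ x : G, x ∈ Bf m ↔ wlen S x ≤ m := by
    intro m x; rw [hBf]; simp [Set.Finite.mem_toFinset]
  set D : ℕ := ⌈6 * δ⌉₊ with hD
  refine ⟨1 + (Bf D).card * C₂ / (C₂ - 1) ^ 2, ?_, ?_⟩
  · have : (0 : ℝ) ≤ (Bf D).card * C₂ / (C₂ - 1) ^ 2 := by positivity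
    linarith
  intro g k hk
  -- the sphere as a finset
  have hSpFin : ({x : G | wlen S x = k} : Set G).Finite :=
    (ballfin k).subset (fun x hx => le_of_eq hx)
  set Sk : Finset G := hSpFin.toFinset with hSkdef
  have hmemSk : ∀ x : G, x ∈ Sk ↔ wlen S x = k := by
    intro x; rw [hSkdef]; simp [Set.Finite.mem_toFinset]
  rw [finsum_mem_eq_finite_toFinset_sum _ hSpFin,
    Set.ncard_eq_toFinset_card _ hSpFin]
  -- growth in terms of finsets
  have hgrow' : ∀ m : ℕ, 1 ≤ m → C₂ * ((Bf (m - 1)).card : ℝ) ≤ ((Bf m).card : ℝ) := by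
    intro m hm
    have := hgrowth m hm
    rwa [Set.ncard_eq_toFinset_card _ (ballfin (m - 1)),
      Set.ncard_eq_toFinset_card _ (ballfin m)] at this
  have hBpos : ∀ m : ℕ, 1 ≤ (Bf m).card := by
    intro m
    refine Finset.card_pos.2 ⟨1, ?_⟩
    rw [hmemB]
    simp [wlen_one]
  -- geometric growth of balls
  have hgeom : ∀ j : ℕ, j ≤ k → C₂ ^ j * ((Bf (k - j)).card : ℝ) ≤ ((Bf k).card : ℝ) := by
    intro j
    induction j with
    | zero => intro _; simp
    | succ n ih =>
      intro hn
      have h1 : C₂ * ((Bf (k - (n + 1))).card : ℝ) ≤ ((Bf (k - n)).card : ℝ) := by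
        have h := hgrow' (k - n) (by omega)
        have e : k - n - 1 = k - (n + 1) := by omega
        rwa [e] at h
      have h2 := ih (by omega)
      have hpow : (0 : ℝ) ≤ C₂ ^ n := by positivity
      calc C₂ ^ (n + 1) * ((Bf (k - (n + 1))).card : ℝ)
          = C₂ ^ n * (C₂ * ((Bf (k - (n + 1))).card : ℝ)) := by ring
        _ ≤ C₂ ^ n * ((Bf (k - n)).card : ℝ) := by
            exact mul_le_mul_of_nonneg_left h1 hpow
        _ ≤ ((Bf k).card : ℝ) := h2
  -- sphere = ball k \ ball (k-1)
  have hSkeq : Sk = Bf k \ Bf (k - 1) := by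
    ext x
    rw [hmemSk, Finset.mem_sdiff, hmemB, hmemB]
    omega
  have hsub : Bf (k - 1) ⊆ Bf k := by
    intro x hx; rw [hmemB] at hx ⊢; omega
  have hSkcard : (Sk.card : ℝ) = ((Bf k).card : ℝ) - ((Bf (k - 1)).card : ℝ) := by
    rw [hSkeq, Finset.card_sdiff_of_subset hsub]
    have := Finset.card_le_card hsub
    push_cast [Nat.cast_sub this]
    ring
  -- key: (C₂ - 1) * #B_k ≤ C₂ * #S_k
  have hkey : (C₂ - 1) * ((Bf k).card : ℝ) ≤ C₂ * (Sk.card : ℝ) := by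
    have h := hgrow' k hk
    rw [hSkcard]; nlinarith
  have hSkpos : (0 : ℝ) < (Sk.card : ℝ) := by
    have h1 : (1 : ℝ) ≤ ((Bf k).card : ℝ) := by exact_mod_cast hBpos k
    nlinarith
  -- per-element layer cake bound
  set A : ℕ → Finset G := fun j => Sk.filter (fun s => (j : ℝ) ≤ gp S g s 1) with hA
  have hper : ∀ s ∈ Sk, gp S g s 1 ≤
      1 + (((Finset.Icc 1 k).filter (fun j : ℕ => (j : ℝ) ≤ gp S g s 1)).card : ℝ) := by
    intro s hs
    set t := gp S g s 1 with ht
    have h0 : 0 ≤ t := gp_nonneg hgen hinv g s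
    have hkt : t ≤ (k : ℝ) := by
      have := gp_le_right hgen hinv g s
      rwa [(hmemSk s).1 hs] at this
    have hfl : ⌊t⌋₊ ≤ k := by
      have := Nat.floor_mono hkt
      rwa [Nat.floor_natCast] at this
    have hsubset : Finset.Icc 1 ⌊t⌋₊ ⊆
        (Finset.Icc 1 k).filter (fun j : ℕ => (j : ℝ) ≤ t) := by
      intro j hj
      rw [Finset.mem_Icc] at hj
      rw [Finset.mem_filter, Finset.mem_Icc]
      refine ⟨⟨hj.1, le_trans hj.2 hfl⟩, ?_⟩
      exact (Nat.le_floor_iff h0).1 hj.2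
    have hc : ⌊t⌋₊ ≤ ((Finset.Icc 1 k).filter (fun j : ℕ => (j : ℝ) ≤ t)).card := by
      have := Finset.card_le_card hsubset
      simpa using this
    have hlt : t < (⌊t⌋₊ : ℝ) + 1 := Nat.lt_floor_add_one t
    have := (Nat.cast_le (α := ℝ)).2 hc
    linarith
  -- sum the layer cake and swap sums
  have hswapN : ∑ s ∈ Sk, ((Finset.Icc 1 k).filter (fun j : ℕ => (j : ℝ) ≤ gp S g s 1)).card
      = ∑ j ∈ Finset.Icc 1 k, (A j).card := by
    simp only [Finset.card_filter, hA]
    exact Finset.sum_comm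
  have hsum1 : ∑ s ∈ Sk, gp S g s 1 ≤
      (Sk.card : ℝ) + ∑ j ∈ Finset.Icc 1 k, ((A j).card : ℝ) := by
    calc ∑ s ∈ Sk, gp S g s 1
        ≤ ∑ s ∈ Sk, (1 + (((Finset.Icc 1 k).filter
            (fun j : ℕ => (j : ℝ) ≤ gp S g s 1)).card : ℝ)) :=
          Finset.sum_le_sum hper
      _ = (Sk.card : ℝ) + ∑ s ∈ Sk, (((Finset.Icc 1 k).filter
            (fun j : ℕ => (j : ℝ) ≤ gp S g s 1)).card : ℝ) := by
          rw [Finset.sum_add_distrib]; simp [mul_comm]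
      _ = (Sk.card : ℝ) + ∑ j ∈ Finset.Icc 1 k, ((A j).card : ℝ) := by
          rw [← Nat.cast_sum, ← Nat.cast_sum, hswapN]
  -- bound each A j
  have hAj : ∀ j ∈ Finset.Icc 1 k, ((A j).card : ℝ) ≤
      ((Bf D).card : ℝ) * (((Bf k).card : ℝ) * (C₂⁻¹) ^ j) := by
    intro j hj
    rw [Finset.mem_Icc] at hj
    have hcount : (A j).card ≤ (Bf D).card * (Bf (k - j)).card := by
      apply count_lemma hgen hinv hδ hhyp g k j hj.2 Sk
        (fun s hs => (hmemSk s).1 hs)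
      · intro x hx
        rw [hmemB]
        have hxD : (wlen S x : ℝ) ≤ (D : ℝ) := le_trans hx (Nat.le_ceil _)
        exact_mod_cast hxD
      · intro x hx
        rw [hmemB]; exact hx
    have h1 : ((A j).card : ℝ) ≤ ((Bf D).card : ℝ) * ((Bf (k - j)).card : ℝ) := by
      exact_mod_cast hcount
    have h2 : ((Bf (k - j)).card : ℝ) ≤ ((Bf k).card : ℝ) * (C₂⁻¹) ^ j := by
      have hg := hgeom j hj.2
      have hpow : (0 : ℝ) < C₂ ^ j := by positivity
      rw [inv_pow, ← div_eq_mul_inv, le_div_iff₀ hpow, mul_comm]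
      exact hg
    have hBD0 : (0 : ℝ) ≤ ((Bf D).card : ℝ) := by positivity
    calc ((A j).card : ℝ) ≤ ((Bf D).card : ℝ) * ((Bf (k - j)).card : ℝ) := h1
      _ ≤ ((Bf D).card : ℝ) * (((Bf k).card : ℝ) * (C₂⁻¹) ^ j) :=
          mul_le_mul_of_nonneg_left h2 hBD0
  -- geometric series bound
  have hgeoser : ∑ j ∈ Finset.Icc 1 k, (C₂⁻¹ : ℝ) ^ j ≤ 1 / (C₂ - 1) := by
    set r : ℝ := C₂⁻¹ with hr
    have hr0 : 0 < r := by rw [hr]; positivity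
    have hr1 : r < 1 := by
      rw [hr, inv_lt_one_iff₀]; right; exact hC₂
    have hmul := geom_sum_mul r (k + 1)
    have hIcc : ∑ j ∈ Finset.Icc 1 k, r ^ j
        = (∑ i ∈ Finset.range (k + 1), r ^ i) - 1 := by
      have : Finset.Icc 1 k = Finset.Ico 1 (k + 1) := by
        ext x; simp [Finset.mem_Icc, Finset.mem_Ico]
      rw [this, Finset.sum_Ico_eq_sub _ (by omega)]
      simp
    rw [hIcc]
    have hpw : (0 : ℝ) ≤ r ^ (k + 1) := by positivity
    -- (∑ range) * (r - 1) = r^(k+1) - 1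
    have hCpos : 0 < C₂ - 1 := by linarith
    rw [div_eq_mul_inv, one_mul]
    have hrinv : (C₂ - 1)⁻¹ = r / (1 - r) := by
      rw [hr]; field_simp
    rw [hrinv]
    rw [le_div_iff₀ (by linarith : (0:ℝ) < 1 - r)]
    nlinarith [hmul]
  -- assemble
  have hBD0 : (0 : ℝ) ≤ ((Bf D).card : ℝ) := by positivity
  have hBk0 : (0 : ℝ) ≤ ((Bf k).card : ℝ) := by positivity
  have hsum2 : ∑ j ∈ Finset.Icc 1 k, ((A j).card : ℝ) ≤
      ((Bf D).card : ℝ) * ((Bf k).card : ℝ) * (1 / (C₂ - 1)) := by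
    calc ∑ j ∈ Finset.Icc 1 k, ((A j).card : ℝ)
        ≤ ∑ j ∈ Finset.Icc 1 k, ((Bf D).card : ℝ) * (((Bf k).card : ℝ) * (C₂⁻¹) ^ j) :=
          Finset.sum_le_sum hAj
      _ = ((Bf D).card : ℝ) * ((Bf k).card : ℝ) * ∑ j ∈ Finset.Icc 1 k, (C₂⁻¹ : ℝ) ^ j := by
          rw [Finset.mul_sum]; congr 1; ext j; ring
      _ ≤ ((Bf D).card : ℝ) * ((Bf k).card : ℝ) * (1 / (C₂ - 1)) := by
          apply mul_le_mul_of_nonneg_left hgeoser (by positivity)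
  rw [div_le_iff₀ hSkpos]
  have hCpos : (0 : ℝ) < C₂ - 1 := by linarith
  have hfinal : ((Bf D).card : ℝ) * ((Bf k).card : ℝ) * (1 / (C₂ - 1)) ≤
      ((Bf D).card : ℝ) * C₂ / (C₂ - 1) ^ 2 * (Sk.card : ℝ) := by
    have hmul := mul_le_mul_of_nonneg_left hkey
      (show (0 : ℝ) ≤ ((Bf D).card : ℝ) / (C₂ - 1) ^ 2 by positivity)
    have e1 : ((Bf D).card : ℝ) / (C₂ - 1) ^ 2 * ((C₂ - 1) * ((Bf k).card : ℝ))
        = ((Bf D).card : ℝ) * ((Bf k).card : ℝ) * (1 / (C₂ - 1)) := by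
      field_simp
    have e2 : ((Bf D).card : ℝ) / (C₂ - 1) ^ 2 * (C₂ * (Sk.card : ℝ))
        = ((Bf D).card : ℝ) * C₂ / (C₂ - 1) ^ 2 * (Sk.card : ℝ) := by
      ring
    rw [e1, e2] at hmul
    exact hmul
  calc ∑ s ∈ Sk, gp S g s 1
      ≤ (Sk.card : ℝ) + ∑ j ∈ Finset.Icc 1 k, ((A j).card : ℝ) := hsum1
    _ ≤ (Sk.card : ℝ) + ((Bf D).card : ℝ) * ((Bf k).card : ℝ) * (1 / (C₂ - 1)) := by
        linarith
    _ ≤ (Sk.card : ℝ) + ((Bf D).card : ℝ) * C₂ / (C₂ - 1) ^ 2 * (Sk.card : ℝ) := by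
        linarith
    _ = (1 + ((Bf D).card : ℝ) * C₂ / (C₂ - 1) ^ 2) * (Sk.card : ℝ) := by ring
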